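/- Assume δ(x_d) = 0 and δ maps span(x_1,…,x_{d−1}) into itself, acting there as a nilpotent linear operator, with the corresponding action on K[U_d,V_d] (so δ(u_d) = δ(v_d) = 0). Then the derivation δ and the map π commute: δ(π(w)) = π(δ(w)) for every w ∈ K[U_{d−1},V_{d−1}]_ω. -/

import Mathlib

noncomputable section

/-- The metabelian relation on the free associative algebra:
products of two commutators are identified with zero. -/
def MetabRel (K : Type*) [CommRing K] (d : ℕ) (p q : FreeAlgebra K (Fin d)) : Prop :=
  q = 0 ∧ ∃ a b c e : FreeAlgebra K (Fin d), p = (a * b - b * a) * (c * e - e * c)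

/-- The free metabelian associative algebra `F_d = A_d/(A_d')²`. -/
abbrev FreeMetab (K : Type*) [CommRing K] (d : ℕ) := RingQuot (MetabRel K d)

/-- The free generators `x_i` of `F_d`. -/
def xg (K : Type*) [CommRing K] (d : ℕ) (i : Fin d) : FreeMetab K d :=
  RingQuot.mkAlgHom K (MetabRel K d) (FreeAlgebra.ι K i)

/-- The commutator ideal `F_d'`: the two-sided ideal generated by all commutators. -/
def commIdeal (K : Type*) [CommRing K] (d : ℕ) : Ideal (FreeMetab K d) :=
  Ideal.span {z | ∃ a f g b : FreeMetab K d, z = a * (f * g - g * f) * b}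

/-- `K[U_d,V_d]`. -/
abbrev PolyUV (K : Type*) [CommRing K] (d : ℕ) := MvPolynomial (Fin d ⊕ Fin d) K

def uP (K : Type*) [CommRing K] (d : ℕ) (i : Fin d) : PolyUV K d := MvPolynomial.X (Sum.inl i)
def vP (K : Type*) [CommRing K] (d : ℕ) (i : Fin d) : PolyUV K d := MvPolynomial.X (Sum.inr i)

/-- Action of a monomial of `K[U_d,V_d]` on `F_d`, implementing
`f·u_i = x_i f` and `f·v_i = [f,x_i]` (on the commutator ideal all the
individual operators commute, so the fixed order of composition is immaterial). -/
def monAct (K : Type*) [CommRing K] (d : ℕ) (m : (Fin d ⊕ Fin d) →₀ ℕ) :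
    Module.End K (FreeMetab K d) :=
  (List.ofFn fun i : Fin d =>
      (LinearMap.mulLeft K (xg K d i) : Module.End K (FreeMetab K d)) ^ m (Sum.inl i)).prod *
  (List.ofFn fun i : Fin d =>
      (LinearMap.mulRight K (xg K d i) - LinearMap.mulLeft K (xg K d i) :
        Module.End K (FreeMetab K d)) ^ m (Sum.inr i)).prod

/-- The action of `K[U_d,V_d]` on the commutator ideal of `F_d`. -/
def act (K : Type*) [CommRing K] (d : ℕ) (p : PolyUV K d) (w : FreeMetab K d) : FreeMetab K d :=
  ∑ m ∈ p.support, p.coeff m • (monAct K d m w)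

/-- The action of a monomial in `u_1,…,u_d,v_1,…,v_d` (the variables corresponding to
`x_1,…,x_d`) on `F_{d+1}`, implementing `f·u_i = x_i f`, `f·v_i = [f,x_i]`. -/
def monActS (K : Type*) [CommRing K] (d : ℕ) (m : (Fin d ⊕ Fin d) →₀ ℕ) :
    Module.End K (FreeMetab K (d + 1)) :=
  (List.ofFn fun i : Fin d =>
      (LinearMap.mulLeft K (xg K (d + 1) i.castSucc) :
        Module.End K (FreeMetab K (d + 1))) ^ m (Sum.inl i)).prod *
  (List.ofFn fun i : Fin d =>
      (LinearMap.mulRight K (xg K (d + 1) i.castSucc)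
          - LinearMap.mulLeft K (xg K (d + 1) i.castSucc) :
        Module.End K (FreeMetab K (d + 1))) ^ m (Sum.inr i)).prod

/-- The action of `K[U_d,V_d] ⊆ K[U_{d+1},V_{d+1}]` on `F_{d+1}`. -/
def actS (K : Type*) [CommRing K] (d : ℕ) (p : PolyUV K d) (w : FreeMetab K (d + 1)) :
    FreeMetab K (d + 1) :=
  ∑ m ∈ p.support, p.coeff m • (monActS K d m w)

/-- The map `π : K[U_d,V_d]_ω → F_{d+1}'`, defined on monomials by
`π(u_{i_1}⋯u_{i_m}v_{j_1}⋯v_{j_n}) = Σ_k [x_{d+1},x_{j_k}]·(v_{j_1}⋯v̂_{j_k}⋯v_{j_n}u_{i_1}⋯u_{i_m})`. -/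
def piMap (K : Type*) [CommRing K] (d : ℕ) (p : PolyUV K d) : FreeMetab K (d + 1) :=
  ∑ m ∈ p.support, p.coeff m •
    ∑ k : Fin d, (m (Sum.inr k)) •
      monActS K d (m - Finsupp.single (Sum.inr k) 1)
        (xg K (d + 1) (Fin.last d) * xg K (d + 1) k.castSucc
          - xg K (d + 1) k.castSucc * xg K (d + 1) (Fin.last d))

/-- `ω(K[V_d])`: the span of the nonconstant monomials in `v_1,…,v_d` only. -/
def omegaV (K : Type*) [CommRing K] (d : ℕ) : Submodule K (PolyUV K d) :=
  Submodule.span K {w : PolyUV K d | ∃ m : (Fin d ⊕ Fin d) →₀ ℕ,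
    m ≠ 0 ∧ (∀ i, m (Sum.inl i) = 0) ∧ w = MvPolynomial.monomial m (1 : K)}

/-- The ideal `K[U_d,V_d]_ω`: the span of the monomials of positive total degree
in the variables `v_1,…,v_d`. -/
def omegaUV (K : Type*) [CommRing K] (d : ℕ) : Submodule K (PolyUV K d) :=
  Submodule.span K {w : PolyUV K d | ∃ m : (Fin d ⊕ Fin d) →₀ ℕ,
    (∃ i, m (Sum.inr i) ≠ 0) ∧ w = MvPolynomial.monomial m (1 : K)}

section Aux

variable {K : Type*} [CommRing K] {d : ℕ}

/-- product of two commutators vanishes -/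
theorem comm_mul_comm (a b c e : FreeMetab K d) :
    (a * b - b * a) * (c * e - e * c) = 0 := by
  obtain ⟨A, rfl⟩ := RingQuot.mkAlgHom_surjective K (MetabRel K d) a
  obtain ⟨B, rfl⟩ := RingQuot.mkAlgHom_surjective K (MetabRel K d) b
  obtain ⟨C, rfl⟩ := RingQuot.mkAlgHom_surjective K (MetabRel K d) c
  obtain ⟨E, rfl⟩ := RingQuot.mkAlgHom_surjective K (MetabRel K d) e
  have h : (MetabRel K d) ((A * B - B * A) * (C * E - E * C)) 0 := ⟨rfl, A, B, C, E, rfl⟩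
  have := RingQuot.mkAlgHom_rel K h
  simpa [map_mul, map_sub] using this

theorem comm_mul_mid (a b t c e : FreeMetab K d) :
    (a * b - b * a) * t * (c * e - e * c) = 0 := by
  have key : (a * b - b * a) * t * (c * e - e * c)
      = (a * b - b * a) * ((t * c) * e - e * (t * c))
        - ((a * b - b * a) * (t * e - e * t)) * c := by simp only [sub_mul, mul_sub, mul_assoc]; abel
  rw [key, comm_mul_comm, comm_mul_comm, zero_mul, sub_zero]

/-- The span of `a[f,g]b`. -/
def Msub (K : Type*) [CommRing K] (d : ℕ) : Submodule K (FreeMetab K d) :=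
  Submodule.span K {z | ∃ a f g b : FreeMetab K d, z = a * (f * g - g * f) * b}

theorem comm_mul_M {w : FreeMetab K d} (hw : w ∈ Msub K d) (a b : FreeMetab K d) :
    (a * b - b * a) * w = 0 := by
  induction hw using Submodule.span_induction with
  | mem z hz =>
    obtain ⟨x, f, g, y, rfl⟩ := hz
    have : (a * b - b * a) * (x * (f * g - g * f) * y)
        = ((a * b - b * a) * x * (f * g - g * f)) * y := by
      simp only [mul_assoc]
    rw [this, comm_mul_mid, zero_mul]
  | zero => simp
  | add x y _ _ hx hy => rw [mul_add, hx, hy, add_zero]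
  | smul c x _ hx => rw [mul_smul_comm, hx, smul_zero]

theorem M_mul_comm {w : FreeMetab K d} (hw : w ∈ Msub K d) (a b : FreeMetab K d) :
    w * (a * b - b * a) = 0 := by
  induction hw using Submodule.span_induction with
  | mem z hz =>
    obtain ⟨x, f, g, y, rfl⟩ := hz
    have : (x * (f * g - g * f) * y) * (a * b - b * a)
        = x * ((f * g - g * f) * y * (a * b - b * a)) := by
      simp only [mul_assoc]
    rw [this, comm_mul_mid, mul_zero]
  | zero => simp
  | add x y _ _ hx hy => rw [add_mul, hx, hy, add_zero]
  | smul c x _ hx => rw [smul_mul_assoc, hx, smul_zero]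

theorem mulLeft_mem_M {w : FreeMetab K d} (hw : w ∈ Msub K d) (x : FreeMetab K d) :
    x * w ∈ Msub K d := by
  induction hw using Submodule.span_induction with
  | mem z hz =>
    obtain ⟨a, f, g, b, rfl⟩ := hz
    exact Submodule.subset_span ⟨x * a, f, g, b, by simp [mul_assoc]⟩
  | zero => simp
  | add u v _ _ hu hv => rw [mul_add]; exact add_mem hu hv
  | smul c u _ hu => rw [mul_smul_comm]; exact Submodule.smul_mem _ _ hu

theorem mulRight_mem_M {w : FreeMetab K d} (hw : w ∈ Msub K d) (x : FreeMetab K d) :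
    w * x ∈ Msub K d := by
  induction hw using Submodule.span_induction with
  | mem z hz =>
    obtain ⟨a, f, g, b, rfl⟩ := hz
    exact Submodule.subset_span ⟨a, f, g, b * x, by simp [mul_assoc]⟩
  | zero => simp
  | add u v _ _ hu hv => rw [add_mul]; exact add_mem hu hv
  | smul c u _ hu => rw [smul_mul_assoc]; exact Submodule.smul_mem _ _ hu

theorem comm_mem_M (f g : FreeMetab K d) : f * g - g * f ∈ Msub K d :=
  Submodule.subset_span ⟨1, f, g, 1, by simp⟩

theorem swap_LL {w : FreeMetab K d} (hw : w ∈ Msub K d) (x y : FreeMetab K d) :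
    x * (y * w) = y * (x * w) := by
  rw [← sub_eq_zero]
  have key : x * (y * w) - y * (x * w) = (x * y - y * x) * w := by
    simp only [sub_mul, mul_assoc]
  rw [key, comm_mul_M hw]

theorem swap_LD {w : FreeMetab K d} (hw : w ∈ Msub K d) (x y : FreeMetab K d) :
    x * (w * y - y * w) = (x * w) * y - y * (x * w) := by
  rw [← sub_eq_zero]
  have key : x * (w * y - y * w) - ((x * w) * y - y * (x * w)) = (y * x - x * y) * w := by
    simp only [sub_mul, mul_sub, mul_assoc]; abel
  rw [key, comm_mul_M hw]

theorem swap_DD {w : FreeMetab K d} (hw : w ∈ Msub K d) (x y : FreeMetab K d) :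
    ((w * y - y * w) * x - x * (w * y - y * w))
      = ((w * x - x * w) * y - y * (w * x - x * w)) := by
  rw [← sub_eq_zero]
  have key : ((w * y - y * w) * x - x * (w * y - y * w))
      - ((w * x - x * w) * y - y * (w * x - x * w))
      = w * (y * x - x * y) - (y * x - x * y) * w := by
    simp only [sub_mul, mul_sub, mul_assoc]; abel
  rw [key, comm_mul_M hw, M_mul_comm hw, sub_zero]

/-- The basic operators: `op (inl i) = L_i`, `op (inr i) = D_i`. -/
def opS (K : Type*) [CommRing K] (d : ℕ) : Fin d ⊕ Fin d → Module.End K (FreeMetab K (d + 1))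
  | Sum.inl i => LinearMap.mulLeft K (xg K (d + 1) i.castSucc)
  | Sum.inr i => LinearMap.mulRight K (xg K (d + 1) i.castSucc)
      - LinearMap.mulLeft K (xg K (d + 1) i.castSucc)

theorem opS_inl_apply (i : Fin d) (w : FreeMetab K (d + 1)) :
    opS K d (Sum.inl i) w = xg K (d + 1) i.castSucc * w := rfl

theorem opS_inr_apply (i : Fin d) (w : FreeMetab K (d + 1)) :
    opS K d (Sum.inr i) w
      = w * xg K (d + 1) i.castSucc - xg K (d + 1) i.castSucc * w := rfl

/-- Endomorphisms preserving `Msub`. -/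
def PreM (f : Module.End K (FreeMetab K d)) : Prop := ∀ w ∈ Msub K d, f w ∈ Msub K d

/-- Endomorphisms commuting on `Msub`. -/
def CommOnM (f g : Module.End K (FreeMetab K d)) : Prop :=
  ∀ w ∈ Msub K d, f (g w) = g (f w)

theorem PreM_one : PreM (1 : Module.End K (FreeMetab K d)) := fun w hw => hw

theorem PreM_mul {f g : Module.End K (FreeMetab K d)} (hf : PreM f) (hg : PreM g) :
    PreM (f * g) := fun w hw => hf _ (hg w hw)

theorem PreM_pow {f : Module.End K (FreeMetab K d)} (hf : PreM f) (n : ℕ) : PreM (f ^ n) := by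
  induction n with
  | zero => simpa using PreM_one
  | succ n ih => rw [pow_succ]; exact PreM_mul ih hf

theorem PreM_opS (s : Fin d ⊕ Fin d) : PreM (opS K d s) := by
  cases s with
  | inl i => intro w hw; exact mulLeft_mem_M hw _
  | inr i =>
    intro w hw
    rw [opS_inr_apply]
    exact sub_mem (mulRight_mem_M hw _) (mulLeft_mem_M hw _)

theorem CommOnM_opS (s t : Fin d ⊕ Fin d) : CommOnM (opS K d s) (opS K d t) := by
  intro w hw
  cases s with
  | inl i =>
    cases t with
    | inl j =>
      rw [opS_inl_apply, opS_inl_apply, opS_inl_apply, opS_inl_apply, swap_LL hw]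
    | inr j =>
      rw [opS_inl_apply, opS_inr_apply, opS_inr_apply, opS_inl_apply, swap_LD hw]
  | inr i =>
    cases t with
    | inl j =>
      rw [opS_inr_apply, opS_inl_apply, opS_inl_apply, opS_inr_apply, ← swap_LD hw]
    | inr j =>
      rw [opS_inr_apply, opS_inr_apply, opS_inr_apply, opS_inr_apply, swap_DD hw]

theorem CommOnM_one {f : Module.End K (FreeMetab K d)} : CommOnM f 1 := fun w _ => rfl

theorem CommOnM_mul {f g h : Module.End K (FreeMetab K d)} (hg : PreM g) (hh : PreM h)
    (hfg : CommOnM f g) (hfh : CommOnM f h) : CommOnM f (g * h) := by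
  intro w hw
  show f (g (h w)) = g (h (f w))
  rw [hfg _ (hh w hw), hfh w hw]

theorem CommOnM_pow {f g : Module.End K (FreeMetab K d)} (hg : PreM g)
    (hfg : CommOnM f g) (n : ℕ) : CommOnM f (g ^ n) := by
  induction n with
  | zero => simpa using CommOnM_one
  | succ n ih => rw [pow_succ]; exact CommOnM_mul (PreM_pow hg n) hg ih hfg

theorem PreM_listProd {l : List (Module.End K (FreeMetab K d))}
    (hl : ∀ f ∈ l, PreM f) : PreM l.prod := by
  induction l with
  | nil => simpa using PreM_one
  | cons h t ih =>
    rw [List.prod_cons]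
    exact PreM_mul (hl h (by simp)) (ih fun f hf => hl f (List.mem_cons_of_mem _ hf))

theorem CommOnM_listProd {g : Module.End K (FreeMetab K d)}
    {l : List (Module.End K (FreeMetab K d))}
    (hp : ∀ f ∈ l, PreM f) (hc : ∀ f ∈ l, CommOnM g f) : CommOnM g l.prod := by
  induction l with
  | nil => simpa using CommOnM_one
  | cons h t ih =>
    rw [List.prod_cons]
    exact CommOnM_mul (hp h (by simp))
      (PreM_listProd fun f hf => hp f (List.mem_cons_of_mem _ hf))
      (hc h (by simp))
      (ih (fun f hf => hp f (List.mem_cons_of_mem _ hf))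
        (fun f hf => hc f (List.mem_cons_of_mem _ hf)))

/-- Bumping one entry of an `ofFn`-list product by a commuting operator. -/
theorem ofFn_bump {n : ℕ} (f : Fin n → Module.End K (FreeMetab K d)) (i : Fin n)
    (G : Module.End K (FreeMetab K d))
    (hp : ∀ j, PreM (f j)) (hc : ∀ j, CommOnM G (f j)) :
    ∀ w ∈ Msub K d,
      (List.ofFn (Function.update f i (G * f i))).prod w = G ((List.ofFn f).prod w) := by
  induction n with
  | zero => exact absurd i.isLt (by omega)
  | succ n ih =>
    intro w hw
    induction i using Fin.cases with
    | zero =>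
      rw [List.ofFn_succ, List.ofFn_succ, List.prod_cons, List.prod_cons]
      have h1 : Function.update f 0 (G * f 0) 0 = G * f 0 := by simp
      have h2 : ∀ j : Fin n, Function.update f 0 (G * f 0) j.succ = f j.succ := by
        intro j; apply Function.update_of_ne; simp [Fin.ext_iff]
      rw [h1]
      have h3 : (List.ofFn fun j : Fin n => Function.update f 0 (G * f 0) j.succ)
          = List.ofFn fun j : Fin n => f j.succ := by
        exact congrArg List.ofFn (funext h2)
      rw [h3]
      rfl
    | succ i' =>
      rw [List.ofFn_succ, List.ofFn_succ, List.prod_cons, List.prod_cons]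
      have h1 : Function.update f i'.succ (G * f i'.succ) 0 = f 0 := by
        apply Function.update_of_ne; simp [Fin.ext_iff]
      have h2 : (List.ofFn fun j : Fin n => Function.update f i'.succ (G * f i'.succ) j.succ)
          = List.ofFn (Function.update (fun j : Fin n => f j.succ) i'
              (G * (fun j : Fin n => f j.succ) i')) := by
        congr 1; funext j
        rcases eq_or_ne j i' with rfl | hne
        · simp
        · rw [Function.update_of_ne (fun h => hne (Fin.succ_injective _ h)),
            Function.update_of_ne hne]
      rw [h1, h2]
      show f 0 ((List.ofFn (Function.update (fun j : Fin n => f j.succ) i'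
              (G * (fun j : Fin n => f j.succ) i'))).prod w) = G (f 0 (_root_.id ((List.ofFn fun j : Fin n => f j.succ).prod w)))
      rw [ih (fun j => f j.succ) i' (fun j => hp j.succ) (fun j => hc j.succ) w hw]
      have hmem : (List.ofFn fun j : Fin n => f j.succ).prod w ∈ Msub K d := by
        apply PreM_listProd (fun g hg => ?_) w hw
        obtain ⟨j, rfl⟩ := List.mem_ofFn.mp hg
        exact hp j.succ
      exact (hc 0 _ hmem).symm

theorem monActS_eq (m : (Fin d ⊕ Fin d) →₀ ℕ) :
    monActS K d m
      = (List.ofFn fun i : Fin d => opS K d (Sum.inl i) ^ m (Sum.inl i)).prod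
        * (List.ofFn fun i : Fin d => opS K d (Sum.inr i) ^ m (Sum.inr i)).prod := rfl

theorem monActS_zero : monActS K d 0 = 1 := by
  rw [monActS_eq]
  simp

theorem PreM_monActS (m : (Fin d ⊕ Fin d) →₀ ℕ) : PreM (monActS K d m) := by
  rw [monActS_eq]
  apply PreM_mul <;>
  · apply PreM_listProd
    intro f hf
    obtain ⟨j, rfl⟩ := List.mem_ofFn.mp hf
    exact PreM_pow (PreM_opS _) _

theorem CommOnM_opS_monActS (s : Fin d ⊕ Fin d) (m : (Fin d ⊕ Fin d) →₀ ℕ) :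
    CommOnM (opS K d s) (monActS K d m) := by
  rw [monActS_eq]
  apply CommOnM_mul
  · apply PreM_listProd
    intro f hf
    obtain ⟨j, rfl⟩ := List.mem_ofFn.mp hf
    exact PreM_pow (PreM_opS _) _
  · apply PreM_listProd
    intro f hf
    obtain ⟨j, rfl⟩ := List.mem_ofFn.mp hf
    exact PreM_pow (PreM_opS _) _
  all_goals
  · apply CommOnM_listProd
    · intro f hf
      obtain ⟨j, rfl⟩ := List.mem_ofFn.mp hf
      exact PreM_pow (PreM_opS _) _
    · intro f hf
      obtain ⟨j, rfl⟩ := List.mem_ofFn.mp hf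
      exact CommOnM_pow (PreM_opS _) (CommOnM_opS _ _) _

theorem monActS_bump (m : (Fin d ⊕ Fin d) →₀ ℕ) (s : Fin d ⊕ Fin d)
    {w : FreeMetab K (d + 1)} (hw : w ∈ Msub K (d + 1)) :
    monActS K d (m + Finsupp.single s 1) w = opS K d s (monActS K d m w) := by
  have hpre : ∀ (t : Fin d ⊕ Fin d) (n : ℕ), PreM ((opS K d t) ^ n) :=
    fun t n => PreM_pow (PreM_opS t) n
  cases s with
  | inl i =>
    have hD : ∀ j : Fin d, ((m + Finsupp.single (Sum.inl i) 1 : (Fin d ⊕ Fin d) →₀ ℕ)) (Sum.inr j) = m (Sum.inr j) := by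
      intro j; simp [Finsupp.single_apply]
    have hL : (fun j : Fin d => opS K d (Sum.inl j)
          ^ ((m + Finsupp.single (Sum.inl i) 1 : (Fin d ⊕ Fin d) →₀ ℕ)) (Sum.inl j))
        = Function.update (fun j : Fin d => opS K d (Sum.inl j) ^ m (Sum.inl j)) i
            (opS K d (Sum.inl i) * (opS K d (Sum.inl i) ^ m (Sum.inl i))) := by
      funext j
      rcases eq_or_ne j i with rfl | hne
      · simp [pow_succ']
      · rw [Function.update_of_ne hne]
        simp [Finsupp.single_apply, Ne.symm hne]
    rw [monActS_eq, monActS_eq]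
    simp only [hD, hL]
    have hDw : (List.ofFn fun j : Fin d => opS K d (Sum.inr j) ^ m (Sum.inr j)).prod w
        ∈ Msub K (d + 1) := by
      apply PreM_listProd (fun f hf => ?_) w hw
      obtain ⟨j, rfl⟩ := List.mem_ofFn.mp hf
      exact hpre _ _
    rw [Module.End.mul_apply, Module.End.mul_apply,
      ofFn_bump (fun j : Fin d => opS K d (Sum.inl j) ^ m (Sum.inl j)) i (opS K d (Sum.inl i))
        (fun j => hpre _ _) (fun j => CommOnM_pow (PreM_opS _) (CommOnM_opS _ _) _) _ hDw]
  | inr i =>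
    have hL : ∀ j : Fin d, ((m + Finsupp.single (Sum.inr i) 1 : (Fin d ⊕ Fin d) →₀ ℕ)) (Sum.inl j) = m (Sum.inl j) := by
      intro j; simp [Finsupp.single_apply]
    have hD : (fun j : Fin d => opS K d (Sum.inr j)
          ^ ((m + Finsupp.single (Sum.inr i) 1 : (Fin d ⊕ Fin d) →₀ ℕ)) (Sum.inr j))
        = Function.update (fun j : Fin d => opS K d (Sum.inr j) ^ m (Sum.inr j)) i
            (opS K d (Sum.inr i) * (opS K d (Sum.inr i) ^ m (Sum.inr i))) := by
      funext j
      rcases eq_or_ne j i with rfl | hne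
      · simp [pow_succ']
      · rw [Function.update_of_ne hne]
        simp [Finsupp.single_apply, Ne.symm hne]
    rw [monActS_eq, monActS_eq]
    simp only [hL, hD]
    rw [Module.End.mul_apply, Module.End.mul_apply,
      ofFn_bump (fun j : Fin d => opS K d (Sum.inr j) ^ m (Sum.inr j)) i (opS K d (Sum.inr i))
        (fun j => hpre _ _) (fun j => CommOnM_pow (PreM_opS _) (CommOnM_opS _ _) _) _ hw]
    have hmem : (List.ofFn fun j : Fin d => opS K d (Sum.inr j) ^ m (Sum.inr j)).prod w
        ∈ Msub K (d + 1) := by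
      apply PreM_listProd (fun f hf => ?_) w hw
      obtain ⟨j, rfl⟩ := List.mem_ofFn.mp hf
      exact hpre _ _
    have hcomm : CommOnM (opS K d (Sum.inr i))
        (List.ofFn fun j : Fin d => opS K d (Sum.inl j) ^ m (Sum.inl j)).prod := by
      apply CommOnM_listProd
      · intro f hf
        obtain ⟨j, rfl⟩ := List.mem_ofFn.mp hf
        exact hpre _ _
      · intro f hf
        obtain ⟨j, rfl⟩ := List.mem_ofFn.mp hf
        exact CommOnM_pow (PreM_opS _) (CommOnM_opS _ _) _
    exact (hcomm _ hmem).symm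

theorem mon_induction {σ : Type*} [Fintype σ] [DecidableEq σ] (p : (σ →₀ ℕ) → Prop)
    (h0 : p 0) (hs : ∀ (s : σ) (m : σ →₀ ℕ), p m → p (m + Finsupp.single s 1)) :
    ∀ m, p m := by
  suffices h : ∀ (n : ℕ) (m : σ →₀ ℕ), (∑ s : σ, m s) = n → p m by
    exact fun m => h _ m rfl
  intro n
  induction n with
  | zero =>
    intro m hm
    have : m = 0 := by
      ext s
      have := (Finset.sum_eq_zero_iff.mp hm) s (Finset.mem_univ s)
      simpa using this
    rwa [this]
  | succ n ih =>
    intro m hm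
    have hex : ∃ s : σ, m s ≠ 0 := by
      by_contra h
      push_neg at h
      simp only [h, Finset.sum_const_zero] at hm
      omega
    obtain ⟨s, hs0⟩ := hex
    have hms : m = (m - Finsupp.single s 1) + Finsupp.single s 1 := by
      ext t
      rcases eq_or_ne t s with rfl | hne
      · simp [Finsupp.single_apply]
        omega
      · simp [Finsupp.single_apply, Ne.symm hne]
    have hdeg : (∑ t : σ, ((m - Finsupp.single s 1 : σ →₀ ℕ)) t) = n := by
      have : (∑ t : σ, m t) = (∑ t : σ, ((m - Finsupp.single s 1 : σ →₀ ℕ)) t)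
          + ∑ t : σ, (Finsupp.single s 1 : σ →₀ ℕ) t := by
        rw [← Finset.sum_add_distrib]
        apply Finset.sum_congr rfl
        intro t _
        conv_lhs => rw [hms]
        simp
      rw [this] at hm
      have h1 : (∑ t : σ, (Finsupp.single s 1 : σ →₀ ℕ) t) = 1 := by
        simp [Finsupp.single_apply]
      omega
    rw [hms]
    exact hs s _ (ih _ hdeg)

theorem monActS_single (s : Fin d ⊕ Fin d) {w : FreeMetab K (d + 1)}
    (hw : w ∈ Msub K (d + 1)) : monActS K d (Finsupp.single s 1) w = opS K d s w := by
  have := monActS_bump (K := K) 0 s hw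
  rwa [zero_add, monActS_zero] at this

theorem monActS_add (m m' : (Fin d ⊕ Fin d) →₀ ℕ) {w : FreeMetab K (d + 1)}
    (hw : w ∈ Msub K (d + 1)) :
    monActS K d (m + m') w = monActS K d m (monActS K d m' w) := by
  induction m using mon_induction with
  | h0 => rw [zero_add, monActS_zero]; rfl
  | hs s m ih =>
    have h1 : m + Finsupp.single s 1 + m' = (m + m') + Finsupp.single s 1 := by
      abel
    rw [h1, monActS_bump _ s hw, ih, ← monActS_bump _ s (PreM_monActS m' w hw)]

theorem actS_eq_sum (p : MvPolynomial (Fin d ⊕ Fin d) K) (w : FreeMetab K (d + 1)) :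
    actS K d p w = Finsupp.sum (AddMonoidAlgebra.coeff p) (fun m c => c • monActS K d m w) := rfl

theorem actS_add_p (p q : MvPolynomial (Fin d ⊕ Fin d) K) (w : FreeMetab K (d + 1)) :
    actS K d (p + q) w = actS K d p w + actS K d q w := by
  rw [actS_eq_sum, actS_eq_sum, actS_eq_sum, AddMonoidAlgebra.coeff_add]
  exact Finsupp.sum_add_index' (fun m => by simp) (fun m c c' => by rw [add_smul])

theorem actS_smul_p (c : K) (p : MvPolynomial (Fin d ⊕ Fin d) K) (w : FreeMetab K (d + 1)) :
    actS K d (c • p) w = c • actS K d p w := by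
  rw [actS_eq_sum, actS_eq_sum, AddMonoidAlgebra.coeff_smul]
  rw [Finsupp.sum_smul_index (fun m => by rw [zero_smul])]
  rw [Finsupp.smul_sum]
  exact Finsupp.sum_congr (fun m _ => by rw [mul_smul])

theorem actS_monomial (m : (Fin d ⊕ Fin d) →₀ ℕ) (c : K) (w : FreeMetab K (d + 1)) :
    actS K d (MvPolynomial.monomial m c) w = c • monActS K d m w := by
  classical
  rcases eq_or_ne c 0 with rfl | hc
  · rw [map_zero]
    rw [actS_eq_sum]
    simp
  · unfold actS
    rw [MvPolynomial.support_monomial]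
    simp [hc, MvPolynomial.coeff_monomial]

theorem actS_zero_p (w : FreeMetab K (d + 1)) : actS K d 0 w = 0 := by
  rw [actS_eq_sum]; simp

theorem actS_sum_p {ι : Type*} (t : Finset ι) (f : ι → MvPolynomial (Fin d ⊕ Fin d) K)
    (w : FreeMetab K (d + 1)) :
    actS K d (∑ i ∈ t, f i) w = ∑ i ∈ t, actS K d (f i) w := by
  induction t using Finset.cons_induction with
  | empty => simp [actS_zero_p]
  | cons a t ha ih => rw [Finset.sum_cons, Finset.sum_cons, actS_add_p, ih]

theorem actS_add_w (p : MvPolynomial (Fin d ⊕ Fin d) K) (a b : FreeMetab K (d + 1)) :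
    actS K d p (a + b) = actS K d p a + actS K d p b := by
  unfold actS
  rw [← Finset.sum_add_distrib]
  exact Finset.sum_congr rfl fun m _ => by rw [map_add, smul_add]

theorem actS_smul_w (p : MvPolynomial (Fin d ⊕ Fin d) K) (c : K) (a : FreeMetab K (d + 1)) :
    actS K d p (c • a) = c • actS K d p a := by
  unfold actS
  rw [Finset.smul_sum]
  exact Finset.sum_congr rfl fun m _ => by rw [map_smul, smul_comm]

theorem actS_sum_w {ι : Type*} (p : MvPolynomial (Fin d ⊕ Fin d) K) (t : Finset ι)
    (f : ι → FreeMetab K (d + 1)) :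
    actS K d p (∑ i ∈ t, f i) = ∑ i ∈ t, actS K d p (f i) := by
  induction t using Finset.cons_induction with
  | empty =>
    simp only [Finset.sum_empty]
    unfold actS
    simp
  | cons a t ha ih => rw [Finset.sum_cons, Finset.sum_cons, actS_add_w, ih]

theorem actS_mem_M (p : MvPolynomial (Fin d ⊕ Fin d) K) {w : FreeMetab K (d + 1)}
    (hw : w ∈ Msub K (d + 1)) : actS K d p w ∈ Msub K (d + 1) := by
  unfold actS
  exact Submodule.sum_mem _ fun m _ => Submodule.smul_mem _ _ (PreM_monActS m w hw)

theorem actS_monActS_comm (q : MvPolynomial (Fin d ⊕ Fin d) K) (m : (Fin d ⊕ Fin d) →₀ ℕ)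
    {w : FreeMetab K (d + 1)} (hw : w ∈ Msub K (d + 1)) :
    actS K d q (monActS K d m w) = monActS K d m (actS K d q w) := by
  unfold actS
  rw [map_sum]
  refine Finset.sum_congr rfl fun m' _ => ?_
  rw [map_smul]
  congr 1
  rw [← monActS_add m' m hw, ← monActS_add m m' hw, add_comm m' m]

theorem actS_opS_comm (q : MvPolynomial (Fin d ⊕ Fin d) K) (s : Fin d ⊕ Fin d)
    {w : FreeMetab K (d + 1)} (hw : w ∈ Msub K (d + 1)) :
    opS K d s (actS K d q w) = actS K d q (opS K d s w) := by
  unfold actS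
  rw [map_sum]
  refine Finset.sum_congr rfl fun m' _ => ?_
  rw [map_smul]
  congr 1
  exact CommOnM_opS_monActS s m' w hw

theorem actS_mul (p q : MvPolynomial (Fin d ⊕ Fin d) K) {w : FreeMetab K (d + 1)}
    (hw : w ∈ Msub K (d + 1)) :
    actS K d (p * q) w = actS K d p (actS K d q w) := by
  induction p using MvPolynomial.induction_on' with
  | add p₁ p₂ h1 h2 => rw [add_mul, actS_add_p, h1, h2, actS_add_p]
  | monomial m c =>
    induction q using MvPolynomial.induction_on' with
    | add q₁ q₂ h1 h2 =>
      rw [mul_add, actS_add_p, h1, h2, actS_add_p, actS_add_w]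
    | monomial m' c' =>
      rw [MvPolynomial.monomial_mul, actS_monomial, actS_monomial m' c' w, actS_smul_w,
        actS_monomial, monActS_add m m' hw, mul_smul, smul_comm c c']

theorem ofFn_prod_eq_single {Mo : Type*} [Monoid Mo] :
    ∀ {n : ℕ} (f : Fin n → Mo) (i : Fin n), (∀ j, j ≠ i → f j = 1) →
      (List.ofFn f).prod = f i := by
  intro n
  induction n with
  | zero => exact fun f i _ => absurd i.isLt (by omega)
  | succ n ih =>
    intro f i hf
    rw [List.ofFn_succ, List.prod_cons]
    induction i using Fin.cases with
    | zero =>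
      have : ∀ x ∈ List.ofFn fun j : Fin n => f j.succ, x = 1 := by
        intro x hx
        obtain ⟨j, rfl⟩ := List.mem_ofFn.mp hx
        exact hf j.succ (by simp [Fin.ext_iff])
      rw [List.prod_eq_one this, mul_one]
    | succ i' =>
      rw [hf 0 (by simp [Fin.ext_iff]), one_mul]
      exact ih (fun j => f j.succ) i' fun j hj =>
        hf j.succ fun h => hj (Fin.succ_injective _ h)

theorem monActS_single_eq (s : Fin d ⊕ Fin d) :
    monActS K d (Finsupp.single s 1) = opS K d s := by
  rw [monActS_eq]
  cases s with
  | inl i =>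
    have hL : (List.ofFn fun j : Fin d =>
        opS K d (Sum.inl j) ^ (Finsupp.single (Sum.inl i) (1:ℕ) : (Fin d ⊕ Fin d) →₀ ℕ) (Sum.inl j)).prod
        = opS K d (Sum.inl i) := by
      rw [ofFn_prod_eq_single _ i (fun j hj => by simp [Finsupp.single_apply, Ne.symm hj])]
      simp
    have hD : (List.ofFn fun j : Fin d =>
        opS K d (Sum.inr j) ^ (Finsupp.single (Sum.inl i) (1:ℕ) : (Fin d ⊕ Fin d) →₀ ℕ) (Sum.inr j)).prod
        = 1 := by
      apply List.prod_eq_one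
      intro x hx
      obtain ⟨j, rfl⟩ := List.mem_ofFn.mp hx
      simp [Finsupp.single_apply]
    rw [hL, hD, mul_one]
  | inr i =>
    have hL : (List.ofFn fun j : Fin d =>
        opS K d (Sum.inl j) ^ (Finsupp.single (Sum.inr i) (1:ℕ) : (Fin d ⊕ Fin d) →₀ ℕ) (Sum.inl j)).prod
        = 1 := by
      apply List.prod_eq_one
      intro x hx
      obtain ⟨j, rfl⟩ := List.mem_ofFn.mp hx
      simp [Finsupp.single_apply]
    have hD : (List.ofFn fun j : Fin d =>
        opS K d (Sum.inr j) ^ (Finsupp.single (Sum.inr i) (1:ℕ) : (Fin d ⊕ Fin d) →₀ ℕ) (Sum.inr j)).prod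
        = opS K d (Sum.inr i) := by
      rw [ofFn_prod_eq_single _ i (fun j hj => by simp [Finsupp.single_apply, Ne.symm hj])]
      simp
    rw [hL, hD, one_mul]

theorem actS_X (t : Fin d ⊕ Fin d) (w : FreeMetab K (d + 1)) :
    actS K d (MvPolynomial.X t) w = opS K d t w := by
  have : (MvPolynomial.X t : PolyUV K d) = MvPolynomial.monomial (Finsupp.single t 1) 1 := rfl
  rw [this, actS_monomial, one_smul, monActS_single_eq]

section Delta

variable (α : Matrix (Fin d) (Fin d) K)
variable (δB : FreeMetab K (d + 1) →ₗ[K] FreeMetab K (d + 1))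
variable (δ' : Derivation K (PolyUV K d) (PolyUV K d))

theorem delta_opS
    (hleibB : ∀ a b : FreeMetab K (d + 1), δB (a * b) = δB a * b + a * δB b)
    (hδBx : ∀ j : Fin d, δB (xg K (d + 1) j.castSucc)
      = ∑ i : Fin d, α i j • xg K (d + 1) i.castSucc)
    (hu : ∀ j, δ' (uP K d j) = ∑ i, α i j • uP K d i)
    (hv : ∀ j, δ' (vP K d j) = ∑ i, α i j • vP K d i)
    (s : Fin d ⊕ Fin d) (w : FreeMetab K (d + 1)) :
    δB (opS K d s w) = opS K d s (δB w) + actS K d (δ' (MvPolynomial.X s)) w := by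
  cases s with
  | inl j =>
    have hXu : (MvPolynomial.X (Sum.inl j) : PolyUV K d) = uP K d j := rfl
    rw [hXu, hu j, actS_sum_p]
    have hterm : ∀ i : Fin d, actS K d (α i j • uP K d i) w
        = α i j • (xg K (d + 1) i.castSucc * w) := by
      intro i
      rw [actS_smul_p, uP, actS_X, opS_inl_apply]
    simp only [hterm]
    rw [opS_inl_apply, opS_inl_apply, hleibB, hδBx j, Finset.sum_mul]
    simp only [smul_mul_assoc]
    abel
  | inr j =>
    have hXv : (MvPolynomial.X (Sum.inr j) : PolyUV K d) = vP K d j := rfl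
    rw [hXv, hv j, actS_sum_p]
    have hterm : ∀ i : Fin d, actS K d (α i j • vP K d i) w
        = α i j • (w * xg K (d + 1) i.castSucc - xg K (d + 1) i.castSucc * w) := by
      intro i
      rw [actS_smul_p, vP, actS_X, opS_inr_apply]
    simp only [hterm]
    rw [opS_inr_apply, opS_inr_apply, map_sub, hleibB, hleibB, hδBx j, Finset.mul_sum,
      Finset.sum_mul]
    simp only [smul_mul_assoc, mul_smul_comm, smul_sub]
    rw [Finset.sum_sub_distrib]
    abel

end Delta

section Main

variable (α : Matrix (Fin d) (Fin d) K)
variable (δB : FreeMetab K (d + 1) →ₗ[K] FreeMetab K (d + 1))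
variable (δ' : Derivation K (PolyUV K d) (PolyUV K d))

theorem delta_monActS
    (hleibB : ∀ a b : FreeMetab K (d + 1), δB (a * b) = δB a * b + a * δB b)
    (hδBx : ∀ j : Fin d, δB (xg K (d + 1) j.castSucc)
      = ∑ i : Fin d, α i j • xg K (d + 1) i.castSucc)
    (hu : ∀ j, δ' (uP K d j) = ∑ i, α i j • uP K d i)
    (hv : ∀ j, δ' (vP K d j) = ∑ i, α i j • vP K d i) :
    ∀ (m : (Fin d ⊕ Fin d) →₀ ℕ), ∀ w ∈ Msub K (d + 1), δB w ∈ Msub K (d + 1) →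
      δB (monActS K d m w)
        = monActS K d m (δB w) + actS K d (δ' (MvPolynomial.monomial m 1)) w := by
  intro m
  induction m using mon_induction with
  | h0 =>
    intro w hw hw'
    have h1 : (MvPolynomial.monomial (0 : (Fin d ⊕ Fin d) →₀ ℕ) (1 : K)) = 1 := by
      simp
    rw [monActS_zero, h1]
    simp only [Derivation.map_one_eq_zero, actS_zero_p, add_zero]
    rfl
  | hs s m ih =>
    intro w hw hw'
    have hmono : (MvPolynomial.monomial (m + Finsupp.single s 1) (1 : K))
        = MvPolynomial.monomial m 1 * MvPolynomial.X s := by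
      have : (MvPolynomial.X s : PolyUV K d) = MvPolynomial.monomial (Finsupp.single s 1) 1 :=
        rfl
      rw [this, MvPolynomial.monomial_mul, one_mul]
    rw [monActS_bump _ s hw,
      delta_opS α δB δ' hleibB hδBx hu hv s (monActS K d m w),
      ih w hw hw', map_add, hmono, Derivation.leibniz]
    rw [smul_eq_mul, smul_eq_mul, actS_add_p, actS_mul _ _ hw, actS_mul _ _ hw,
      actS_X, actS_monomial, one_smul, actS_monActS_comm _ _ hw, ← monActS_bump m s hw']
    abel

theorem delta_actS
    (hleibB : ∀ a b : FreeMetab K (d + 1), δB (a * b) = δB a * b + a * δB b)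
    (hδBx : ∀ j : Fin d, δB (xg K (d + 1) j.castSucc)
      = ∑ i : Fin d, α i j • xg K (d + 1) i.castSucc)
    (hu : ∀ j, δ' (uP K d j) = ∑ i, α i j • uP K d i)
    (hv : ∀ j, δ' (vP K d j) = ∑ i, α i j • vP K d i)
    (q : PolyUV K d) {w : FreeMetab K (d + 1)} (hw : w ∈ Msub K (d + 1))
    (hw' : δB w ∈ Msub K (d + 1)) :
    δB (actS K d q w) = actS K d q (δB w) + actS K d (δ' q) w := by
  conv_lhs => rw [actS]
  rw [map_sum]
  have hterm : ∀ m ∈ q.support, δB (q.coeff m • monActS K d m w)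
      = q.coeff m • (monActS K d m (δB w) + actS K d (δ' (MvPolynomial.monomial m 1)) w) := by
    intro m _
    rw [map_smul, delta_monActS α δB δ' hleibB hδBx hu hv m w hw hw']
  rw [Finset.sum_congr rfl hterm]
  simp only [smul_add]
  rw [Finset.sum_add_distrib]
  congr 1
  have hq : δ' q = ∑ m ∈ q.support, q.coeff m • δ' (MvPolynomial.monomial m 1) := by
    conv_lhs => rw [q.as_sum]
    rw [map_sum]
    refine Finset.sum_congr rfl fun m _ => ?_
    have : (MvPolynomial.monomial m) (q.coeff m) = q.coeff m • MvPolynomial.monomial m 1 := by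
      rw [MvPolynomial.smul_monomial, smul_eq_mul, mul_one]
    rw [this, Derivation.map_smul]
  rw [hq, actS_sum_p]
  refine Finset.sum_congr rfl fun m _ => ?_
  rw [actS_smul_p]

end Main

section Pderiv

variable (α : Matrix (Fin d) (Fin d) K)
variable (δ' : Derivation K (PolyUV K d) (PolyUV K d))

theorem pderiv_delta_X
    (hu : ∀ j, δ' (uP K d j) = ∑ i, α i j • uP K d i)
    (hv : ∀ j, δ' (vP K d j) = ∑ i, α i j • vP K d i)
    (k : Fin d) (s : Fin d ⊕ Fin d) :
      MvPolynomial.pderiv (Sum.inr k) (δ' (MvPolynomial.X s))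
        = ∑ j : Fin d, α k j • MvPolynomial.pderiv (Sum.inr j) (MvPolynomial.X s) := by
  cases s with
  | inl i =>
    rw [show (MvPolynomial.X (Sum.inl i) : PolyUV K d) = uP K d i from rfl, hu i, map_sum]
    simp [uP, MvPolynomial.pderiv_X]
  | inr i =>
    rw [show (MvPolynomial.X (Sum.inr i) : PolyUV K d) = vP K d i from rfl, hv i, map_sum]
    simp [vP, Derivation.map_smul, Pi.single_apply, Sum.inr.injEq, smul_ite, smul_zero,
      Finset.sum_ite_eq, Finset.sum_ite_eq']

theorem pderiv_comm_delta
    (hu : ∀ j, δ' (uP K d j) = ∑ i, α i j • uP K d i)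
    (hv : ∀ j, δ' (vP K d j) = ∑ i, α i j • vP K d i)
    (k : Fin d) (p : PolyUV K d) :
    MvPolynomial.pderiv (Sum.inr k) (δ' p)
      = δ' (MvPolynomial.pderiv (Sum.inr k) p)
        + ∑ j : Fin d, α k j • MvPolynomial.pderiv (Sum.inr j) p := by
  induction p using MvPolynomial.induction_on with
  | C a =>
    have h0 : δ' (MvPolynomial.C a : PolyUV K d) = 0 := by
      rw [show (MvPolynomial.C a : PolyUV K d) = algebraMap K (PolyUV K d) a from rfl]
      exact Derivation.map_algebraMap δ' a
    simp [h0]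
  | add p q hp hq =>
    simp only [map_add, hp, hq, smul_add, Finset.sum_add_distrib]
    abel
  | mul_X p s ih =>
    have hconst : ∀ j : Fin d, δ' (p * MvPolynomial.pderiv (Sum.inr j) (MvPolynomial.X s))
        = MvPolynomial.pderiv (Sum.inr j) (MvPolynomial.X s) * δ' p := by
      intro j
      rcases eq_or_ne s (Sum.inr j) with rfl | hne
      · rw [MvPolynomial.pderiv_X_self, mul_one, one_mul]
      · rw [MvPolynomial.pderiv_X_of_ne hne, mul_zero, map_zero, zero_mul]
    rw [Derivation.leibniz δ' p (MvPolynomial.X s), map_add]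
    simp only [smul_eq_mul, MvPolynomial.pderiv_mul]
    rw [ih, pderiv_delta_X α δ' hu hv k s]
    rw [map_add, Derivation.leibniz, hconst k]
    simp only [smul_eq_mul]
    have hS : MvPolynomial.X s * (δ' (MvPolynomial.pderiv (Sum.inr k) p)
          + ∑ j : Fin d, α k j • MvPolynomial.pderiv (Sum.inr j) p)
        = MvPolynomial.X s * δ' (MvPolynomial.pderiv (Sum.inr k) p)
          + ∑ j : Fin d, α k j • (MvPolynomial.pderiv (Sum.inr j) p * MvPolynomial.X s) := by
      rw [mul_add, Finset.mul_sum]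
      congr 1
      refine Finset.sum_congr rfl fun j _ => ?_
      rw [mul_smul_comm, mul_comm (MvPolynomial.X s)]
    have hP : p * (∑ j : Fin d, α k j • MvPolynomial.pderiv (Sum.inr j) (MvPolynomial.X s))
        = ∑ j : Fin d, α k j • (p * MvPolynomial.pderiv (Sum.inr j) (MvPolynomial.X s)) := by
      rw [Finset.mul_sum]
      exact Finset.sum_congr rfl fun j _ => mul_smul_comm _ _ _
    rw [hS, hP]
    have hsplit : (∑ j : Fin d, α k j • (MvPolynomial.pderiv (Sum.inr j) p * MvPolynomial.X s
          + p * MvPolynomial.pderiv (Sum.inr j) (MvPolynomial.X s)))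
        = (∑ j : Fin d, α k j • (MvPolynomial.pderiv (Sum.inr j) p * MvPolynomial.X s))
          + ∑ j : Fin d, α k j • (p * MvPolynomial.pderiv (Sum.inr j) (MvPolynomial.X s)) := by
      simp only [smul_add, Finset.sum_add_distrib]
    rw [hsplit]
    abel

end Pderiv

def cg (K : Type*) [CommRing K] (d : ℕ) (k : Fin d) : FreeMetab K (d + 1) :=
  xg K (d + 1) (Fin.last d) * xg K (d + 1) k.castSucc
    - xg K (d + 1) k.castSucc * xg K (d + 1) (Fin.last d)

theorem cg_mem_M (k : Fin d) : cg K d k ∈ Msub K (d + 1) := comm_mem_M _ _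

theorem piMap_eq_sum (p : PolyUV K d) :
    piMap K d p = Finsupp.sum (AddMonoidAlgebra.coeff p) (fun m c => c •
      ∑ k : Fin d, (m (Sum.inr k)) • monActS K d (m - Finsupp.single (Sum.inr k) 1) (cg K d k))
    := rfl

theorem piMap_monomial (m : (Fin d ⊕ Fin d) →₀ ℕ) (c : K) :
    piMap K d (MvPolynomial.monomial m c)
      = c • ∑ k : Fin d, (m (Sum.inr k)) •
          monActS K d (m - Finsupp.single (Sum.inr k) 1) (cg K d k) := by
  classical
  rcases eq_or_ne c 0 with rfl | hc
  · rw [map_zero, piMap_eq_sum]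
    simp
  · unfold piMap
    rw [MvPolynomial.support_monomial]
    simp [hc, MvPolynomial.coeff_monomial, cg]

theorem piMap_add (p q : PolyUV K d) : piMap K d (p + q) = piMap K d p + piMap K d q := by
  rw [piMap_eq_sum, piMap_eq_sum, piMap_eq_sum, AddMonoidAlgebra.coeff_add]
  exact Finsupp.sum_add_index' (fun m => by simp) (fun m c c' => by rw [add_smul])

theorem piMap_eq (p : PolyUV K d) :
    piMap K d p = ∑ k : Fin d, actS K d (MvPolynomial.pderiv (Sum.inr k) p) (cg K d k) := by
  induction p using MvPolynomial.induction_on' with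
  | add p q hp hq =>
    rw [piMap_add, hp, hq, ← Finset.sum_add_distrib]
    exact Finset.sum_congr rfl fun k _ => by rw [map_add, actS_add_p]
  | monomial m c =>
    rw [piMap_monomial, Finset.smul_sum]
    refine Finset.sum_congr rfl fun k _ => ?_
    rw [MvPolynomial.pderiv_monomial, actS_monomial]
    rw [show Finsupp.single (Sum.inr k) 1 = Finsupp.single (Sum.inr k : Fin d ⊕ Fin d) 1
      from rfl]
    rw [mul_smul, Nat.cast_smul_eq_nsmul]

end Aux

/-- If the Weitzenböck derivation `δ` of `F_{d+1}` satisfies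
`δ(x_{d+1}) = 0` and maps the span of `x_1,…,x_d` nilpotently into itself,
then `δ` and `π` commute on `K[U_d,V_d]_ω`: `δ(π(w)) = π(δ(w))`. -/
theorem delta_commutes_with_pi
    (K : Type*) [Field K] [CharZero K] (d : ℕ) (hd : 1 ≤ d)
    (α : Matrix (Fin d) (Fin d) K) (hnil : IsNilpotent α) (hne : α ≠ 0)
    (δB : FreeMetab K (d + 1) →ₗ[K] FreeMetab K (d + 1))
    (hleibB : ∀ a b : FreeMetab K (d + 1), δB (a * b) = δB a * b + a * δB b)
    (hδBx : ∀ j : Fin d, δB (xg K (d + 1) j.castSucc)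
      = ∑ i : Fin d, α i j • xg K (d + 1) i.castSucc)
    (hδBlast : δB (xg K (d + 1) (Fin.last d)) = 0)
    (δ' : Derivation K (PolyUV K d) (PolyUV K d))
    (hu : ∀ j, δ' (uP K d j) = ∑ i, α i j • uP K d i)
    (hv : ∀ j, δ' (vP K d j) = ∑ i, α i j • vP K d i) :
    ∀ w ∈ omegaUV K d, δB (piMap K d w) = piMap K d (δ' w) := by
  intro p _
  have hδc : ∀ k : Fin d, δB (cg K d k) = ∑ i : Fin d, α i k • cg K d i := by
    intro k
    unfold cg
    rw [map_sub, hleibB, hleibB, hδBlast, hδBx k, zero_mul, mul_zero, add_zero, zero_add,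
      Finset.mul_sum, Finset.sum_mul, ← Finset.sum_sub_distrib]
    refine Finset.sum_congr rfl fun i _ => ?_
    rw [mul_smul_comm, smul_mul_assoc, smul_sub]
  have hδcM : ∀ k : Fin d, δB (cg K d k) ∈ Msub K (d + 1) := by
    intro k
    rw [hδc k]
    exact Submodule.sum_mem _ fun i _ => Submodule.smul_mem _ _ (cg_mem_M i)
  rw [piMap_eq, piMap_eq, map_sum]
  have hterm : ∀ k : Fin d,
      δB (actS K d (MvPolynomial.pderiv (Sum.inr k) p) (cg K d k))
        = (∑ i : Fin d, α i k • actS K d (MvPolynomial.pderiv (Sum.inr k) p) (cg K d i))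
          + actS K d (δ' (MvPolynomial.pderiv (Sum.inr k) p)) (cg K d k) := by
    intro k
    rw [delta_actS α δB δ' hleibB hδBx hu hv _ (cg_mem_M k) (hδcM k), hδc k,
      actS_sum_w]
    congr 1
    exact Finset.sum_congr rfl fun i _ => actS_smul_w _ _ _
  rw [Finset.sum_congr rfl fun k _ => hterm k]
  have hrhs : ∀ k : Fin d,
      actS K d (MvPolynomial.pderiv (Sum.inr k) (δ' p)) (cg K d k)
        = actS K d (δ' (MvPolynomial.pderiv (Sum.inr k) p)) (cg K d k)
          + ∑ j : Fin d, α k j • actS K d (MvPolynomial.pderiv (Sum.inr j) p) (cg K d k) := by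
    intro k
    rw [pderiv_comm_delta α δ' hu hv k p, actS_add_p, actS_sum_p]
    congr 1
    exact Finset.sum_congr rfl fun j _ => actS_smul_p _ _ _
  rw [Finset.sum_congr rfl fun k _ => hrhs k]
  rw [Finset.sum_add_distrib, Finset.sum_add_distrib, Finset.sum_comm]
  abel
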